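/- Let u and v be finite Lyndon words with u <lex v. Then for every n ≥ 1 the inequalities uⁿ <lex uⁿv ≤lex v hold; in fact uⁿv <lex v. -/

import Mathlib

/-- A finite word is a Lyndon word if it is nonempty and lexicographically
strictly smaller than all of its proper nonempty suffixes. -/
def IsLyndon {A : Type*} [LinearOrder A] (w : List A) : Prop :=
  w ≠ [] ∧ ∀ i : ℕ, 0 < i → i < w.length → w < w.drop i

private lemma lex_self_append {A : Type*} [LinearOrder A] (l t : List A) (ht : t ≠ []) :
    List.Lex (· < ·) l (l ++ t) := by
  induction l with
  | nil =>
    cases t with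
    | nil => exact absurd rfl ht
    | cons a t => exact List.Lex.nil
  | cons a l ih => exact List.Lex.cons ih

private lemma lex_append_of_not_prefix {A : Type*} [LinearOrder A] {u w : List A}
    (h : List.Lex (· < ·) u w) (hnp : ¬ u <+: w) : ∀ t, List.Lex (· < ·) (u ++ t) w := by
  induction h with
  | nil => exact absurd List.nil_prefix hnp
  | @cons a u' w' h ih =>
    intro t
    exact List.Lex.cons (ih (fun hp => hnp (List.cons_prefix_cons.mpr ⟨rfl, hp⟩)) t)
  | @rel a u' b w' hab =>
    intro t
    exact List.Lex.rel hab

private lemma key {A : Type*} [LinearOrder A] {u v : List A}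
    (hu : u ≠ []) (hv : IsLyndon v) (huv : u < v) :
    ∀ n (w : List A), w.length ≤ n → w <:+ v → w ≠ [] → List.Lex (· < ·) (u ++ w) w := by
  intro n
  induction n with
  | zero =>
    intro w hlen _ hw
    exact absurd (List.eq_nil_of_length_eq_zero (Nat.le_zero.mp hlen)) hw
  | succ n ih =>
    intro w hlen hsuf hw
    -- first, u < w
    have hulw : List.Lex (· < ·) u w := by
      obtain ⟨t, ht⟩ := hsuf
      rcases eq_or_ne t [] with rfl | htne
      · simp at ht; subst ht; exact huv
      · have hvw : List.Lex (· < ·) v w := by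
        -- w = v.drop t.length
          have hdrop : v.drop t.length = w := by
            rw [← ht, List.drop_left]
          have h1 : 0 < t.length := List.length_pos_iff.mpr htne
          have h2 : t.length < v.length := by
            rw [← ht, List.length_append]
            have := List.length_pos_iff.mpr hw
            omega
          have := hv.2 t.length h1 h2
          rw [hdrop] at this
          exact this
        exact huv.trans hvw
    by_cases hp : u <+: w
    · obtain ⟨w', rfl⟩ := hp
      have hw' : w' ≠ [] := by
        rintro rfl
        simp at hulw
      have hlen' : w'.length ≤ n := by
        have : 0 < u.length := List.length_pos_iff.mpr hu
        have := hlen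
        rw [List.length_append] at this
        omega
      have hsuf' : w' <:+ v := (List.suffix_append u w').trans hsuf
      exact List.Lex.append_left _ (ih w' hlen' hsuf' hw') u
    · exact lex_append_of_not_prefix hulw hp _

theorem lyndon_pow_mul_lt {A : Type*} [LinearOrder A] (u v : List A)
    (hu : IsLyndon u) (hv : IsLyndon v) (huv : u < v) (n : ℕ) (hn : 1 ≤ n) :
    (List.replicate n u).flatten < (List.replicate n u).flatten ++ v ∧
    (List.replicate n u).flatten ++ v < v := by
  constructor
  · exact lex_self_append _ v hv.1
  · induction n with
    | zero => omega
    | succ n ih =>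
      rcases Nat.eq_zero_or_pos n with rfl | hn'
      · simpa using key hu.1 hv huv v.length v le_rfl List.suffix_rfl hv.1
      · have h1 : (List.replicate n u).flatten ++ v < v := ih hn'
        have h2 : u ++ ((List.replicate n u).flatten ++ v) < u ++ v :=
          List.Lex.append_left _ h1 u
        have h3 : u ++ v < v :=
          key hu.1 hv huv v.length v le_rfl List.suffix_rfl hv.1
        have : (List.replicate (n+1) u).flatten ++ v
            = u ++ ((List.replicate n u).flatten ++ v) := by
          simp [List.replicate_succ]
        rw [this]
        exact h2.trans h3
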